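/- For every ε > 0, m > 0, and each fixed μ ∈ ℤ₊, the series Σ_{λ=1}^∞ b₁(λ,μ,m,ε)² converges to 1. -/

import Mathlib

noncomputable section

/-- The `i`-th move of a checker path encoded as `f : Fin n → Bool`
(`true` = upwards-right move `(ε,ε)`, `false` = upwards-left move `(−ε,ε)`);
out-of-range indices default to `true`. -/
def fcStep {n : ℕ} (f : Fin n → Bool) (i : ℕ) : Bool :=
  if h : i < n then f ⟨i, h⟩ else true

/-- The number of turns of the checker path `f`. -/
def fcTurns {n : ℕ} (f : Fin n → Bool) : ℕ :=
  ((Finset.range (n - 1)).filter fun i => fcStep f i ≠ fcStep f (i + 1)).card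

/-- The position (in units of `ε`) of the checker path `f` after `i` moves,
starting from the origin. -/
def fcPos {n : ℕ} (f : Fin n → Bool) (i : ℕ) : ℤ :=
  ∑ j ∈ Finset.range i, (if fcStep f j then (1 : ℤ) else -1)

/-- Checker paths from `(0,0)` to `(εx, εn)` whose first step is to `(ε,ε)`. -/
def fcPaths (n : ℕ) (x : ℤ) : Finset (Fin n → Bool) :=
  Finset.univ.filter fun f =>
    (∀ i : Fin n, (i : ℕ) = 0 → f i = true) ∧ fcPos f n = x

/-- The amplitude `a(εx, εn, m, ε)`. -/
def fcAmp (m ε : ℝ) (x : ℤ) (n : ℕ) : ℂ :=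
  (((1 + m ^ 2 * ε ^ 2) ^ ((1 - (n : ℝ)) / 2) : ℝ) : ℂ) * Complex.I *
    ∑ f ∈ fcPaths n x, (-Complex.I * (m * ε)) ^ fcTurns f

/-- The probability `P(εx, εn, m, ε)` to find the electron at `(εx, εn)`. -/
def fcP (m ε : ℝ) (x : ℤ) (n : ℕ) : ℝ := ‖fcAmp m ε x n‖ ^ 2

/-- `b(λ,μ,m,ε) := a(ε(λ−μ), ε(λ+μ), m, ε)`. -/
def fcB (m ε : ℝ) (lam mu : ℕ) : ℂ := fcAmp m ε ((lam : ℤ) - (mu : ℤ)) (lam + mu)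


-- helper lemmas
lemma fcStep_eq {n : ℕ} (f : Fin n → Bool) (i : ℕ) (h : i < n) : fcStep f i = f ⟨i, h⟩ :=
  dif_pos h

lemma fcStep_snoc_of_le {k : ℕ} (g : Fin (k+1) → Bool) (b : Bool) {i : ℕ} (h : i ≤ k) :
    fcStep (Fin.snoc g b) i = fcStep g i := by
  have h1 : i < k + 2 := by omega
  have h2 : i < k + 1 := by omega
  rw [fcStep_eq _ i h1, fcStep_eq _ i h2]
  have : (⟨i, h1⟩ : Fin (k+2)) = Fin.castSucc ⟨i, h2⟩ := rfl
  rw [this, Fin.snoc_castSucc]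

lemma fcStep_snoc_last {k : ℕ} (g : Fin (k+1) → Bool) (b : Bool) :
    fcStep (Fin.snoc g b) (k+1) = b := by
  rw [fcStep_eq _ _ (by omega : k + 1 < k + 2)]
  have h : (⟨k+1, by omega⟩ : Fin (k+2)) = Fin.last (k+1) := rfl
  rw [h, Fin.snoc_last]

lemma fcPos_snoc {k : ℕ} (g : Fin (k+1) → Bool) (b : Bool) :
    fcPos (Fin.snoc g b) (k+2) = fcPos g (k+1) + (if b then 1 else -1) := by
  unfold fcPos
  rw [Finset.sum_range_succ, fcStep_snoc_last]
  congr 1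
  refine Finset.sum_congr rfl fun i hi => ?_
  rw [fcStep_snoc_of_le g b (by simp only [Finset.mem_range] at hi; omega)]

lemma fcTurns_snoc {k : ℕ} (g : Fin (k+1) → Bool) (b : Bool) :
    fcTurns (Fin.snoc g b) = fcTurns g + (if fcStep g k = b then 0 else 1) := by
  unfold fcTurns
  have h1 : k + 2 - 1 = k + 1 := rfl
  have h2 : k + 1 - 1 = k := rfl
  rw [h1, h2, Finset.range_add_one, Finset.filter_insert]
  have hcong : (Finset.range k).filter
        (fun i => fcStep (Fin.snoc g b) i ≠ fcStep (Fin.snoc g b) (i+1))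
      = (Finset.range k).filter (fun i => fcStep g i ≠ fcStep g (i+1)) := by
    apply Finset.filter_congr
    intro i hi
    simp only [Finset.mem_range] at hi
    rw [fcStep_snoc_of_le g b (by omega), fcStep_snoc_of_le g b (by omega)]
  rw [fcStep_snoc_of_le g b le_rfl, fcStep_snoc_last]
  by_cases hb : fcStep g k = b
  · rw [if_pos hb, if_neg (by simp [hb]), hcong, add_zero]
  · rw [if_neg hb, if_pos hb, Finset.card_insert_of_notMem (by simp), hcong]

lemma mem_fcPaths_iff {n : ℕ} {x : ℤ} {f : Fin n → Bool} :
    f ∈ fcPaths n x ↔ ((∀ i : Fin n, (i:ℕ) = 0 → f i = true) ∧ fcPos f n = x) := by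
  simp [fcPaths]

lemma snoc_mem_fcPaths_iff {k : ℕ} {x : ℤ} (g : Fin (k+1) → Bool) (b : Bool) :
    Fin.snoc g b ∈ fcPaths (k+2) x ↔ g ∈ fcPaths (k+1) (x - (if b then 1 else -1)) := by
  rw [mem_fcPaths_iff, mem_fcPaths_iff, fcPos_snoc]
  constructor
  · rintro ⟨h0, hp⟩
    refine ⟨fun i hi => ?_, by omega⟩
    have := h0 i.castSucc (by simpa using hi)
    rwa [Fin.snoc_castSucc] at this
  · rintro ⟨h0, hp⟩
    refine ⟨fun i hi => ?_, by omega⟩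
    have hi' : (i:ℕ) < k+1 := by omega
    have hieq : i = Fin.castSucc ⟨(i:ℕ), hi'⟩ := by ext; rfl
    rw [hieq, Fin.snoc_castSucc]
    exact h0 _ hi

def fcPQ (m ε : ℝ) : ℕ → ℤ → ℝ × ℝ
  | 0, x => (if x = 1 then 1 else 0, 0)
  | (k+1), x => ((fcPQ m ε k (x-1)).1 - m*ε*(fcPQ m ε k (x-1)).2,
                 m*ε*(fcPQ m ε k (x+1)).1 + (fcPQ m ε k (x+1)).2)

lemma fcPQ_zero_1 (m ε : ℝ) (x : ℤ) : (fcPQ m ε 0 x).1 = if x = 1 then 1 else 0 := rfl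
lemma fcPQ_zero_2 (m ε : ℝ) (x : ℤ) : (fcPQ m ε 0 x).2 = 0 := rfl
lemma fcPQ_succ_1 (m ε : ℝ) (j : ℕ) (x : ℤ) :
    (fcPQ m ε (j+1) x).1 = (fcPQ m ε j (x-1)).1 - m*ε*(fcPQ m ε j (x-1)).2 := rfl
lemma fcPQ_succ_2 (m ε : ℝ) (j : ℕ) (x : ℤ) :
    (fcPQ m ε (j+1) x).2 = m*ε*(fcPQ m ε j (x+1)).1 + (fcPQ m ε j (x+1)).2 := rfl

lemma fcPos_one {x : ℤ} (f : Fin 1 → Bool) : fcPos f 1 = if f ⟨0, one_pos⟩ then 1 else -1 := by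
  simp [fcPos, Finset.sum_range_one, fcStep]

lemma fcPaths_one (x : ℤ) :
    fcPaths 1 x = if x = 1 then {fun _ => true} else (∅ : Finset (Fin 1 → Bool)) := by
  by_cases hx : x = 1
  · subst hx
    rw [if_pos rfl]
    ext f
    rw [mem_fcPaths_iff, Finset.mem_singleton]
    constructor
    · rintro ⟨h0, _⟩
      funext i
      have : (i : ℕ) = 0 := by omega
      exact h0 i this
    · rintro rfl
      refine ⟨fun i _ => rfl, ?_⟩
      rw [fcPos_one (x := 1)]
      simp
  · rw [if_neg hx]
    ext f
    simp only [Finset.notMem_empty, iff_false, mem_fcPaths_iff, not_and]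
    intro h0
    have hf0 : f ⟨0, one_pos⟩ = true := h0 _ rfl
    rw [fcPos_one (x := x), hf0]
    simp [hx, Ne.symm]

lemma fcTurns_one (f : Fin 1 → Bool) : fcTurns f = 0 := by
  simp [fcTurns]

lemma fc_key (m ε : ℝ) : ∀ (k : ℕ) (x : ℤ),
    ((∑ f ∈ (fcPaths (k+1) x).filter (fun f => fcStep f k = true),
        (-Complex.I*(m*ε))^(fcTurns f)) = ((fcPQ m ε k x).1 : ℂ))
  ∧ ((∑ f ∈ (fcPaths (k+1) x).filter (fun f => fcStep f k = false),
        (-Complex.I*(m*ε))^(fcTurns f)) = -Complex.I * ((fcPQ m ε k x).2 : ℂ)) := by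
  intro k
  induction k with
  | zero =>
    intro x
    have hmem : ∀ f ∈ fcPaths 1 x, fcStep f 0 = true := by
      intro f hf
      rw [mem_fcPaths_iff] at hf
      rw [fcStep_eq f 0 one_pos]
      exact hf.1 _ rfl
    constructor
    · rw [Finset.filter_true_of_mem hmem]
      have : ∀ f ∈ fcPaths 1 x, (-Complex.I*(m*ε))^(fcTurns f) = 1 := by
        intro f _; rw [fcTurns_one, pow_zero]
      rw [Finset.sum_congr rfl this, Finset.sum_const, fcPaths_one]
      by_cases hx : x = 1 <;> simp [hx, fcPQ]
    · have : (fcPaths 1 x).filter (fun f => fcStep f 0 = false) = ∅ := by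
        apply Finset.filter_false_of_mem
        intro f hf
        rw [hmem f hf]; simp
      rw [this]
      simp [fcPQ]
  | succ k ih =>
    intro x
    have hbij : ∀ (b : Bool), (∑ f ∈ (fcPaths (k+2) x).filter (fun f => fcStep f (k+1) = b),
          (-Complex.I*(m*ε))^(fcTurns f))
        = ∑ g ∈ fcPaths (k+1) (x - (if b then 1 else -1)),
            (-Complex.I*(m*ε))^(fcTurns g + (if fcStep g k = b then 0 else 1)) := by
      intro b
      have ha : ∀ f ∈ (fcPaths (k+2) x).filter (fun f => fcStep f (k+1) = b),
          Fin.snoc (Fin.init f) b = f := by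
        intro f hf
        simp only [Finset.mem_filter] at hf
        have hlast : f (Fin.last (k+1)) = b := by
          rw [← hf.2, fcStep_eq f (k+1) (by omega)]
          rfl
        conv_rhs => rw [← Fin.snoc_init_self f]
        rw [hlast]
      refine Finset.sum_nbij' (fun f => Fin.init f) (fun g => Fin.snoc g b) ?_ ?_ ?_ ?_ ?_
      · intro f hf
        rw [← snoc_mem_fcPaths_iff _ b, ha f hf]
        exact (Finset.mem_filter.1 hf).1
      · intro g hg
        rw [Finset.mem_filter]
        exact ⟨(snoc_mem_fcPaths_iff g b).2 hg, fcStep_snoc_last g b⟩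
      · exact ha
      · intro g _; simp
      · intro f hf
        conv_lhs => rw [← ha f hf]
        rw [fcTurns_snoc]
    have hsplit : ∀ (b : Bool) (y : ℤ),
        (∑ g ∈ fcPaths (k+1) y,
            (-Complex.I*(m*ε))^(fcTurns g + (if fcStep g k = b then 0 else 1)))
        = (∑ g ∈ (fcPaths (k+1) y).filter (fun g => fcStep g k = b),
             (-Complex.I*(m*ε))^(fcTurns g))
          + (∑ g ∈ (fcPaths (k+1) y).filter (fun g => fcStep g k = !b),
             (-Complex.I*(m*ε))^(fcTurns g)) * (-Complex.I*(m*ε)) := by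
      intro b y
      rw [← Finset.sum_filter_add_sum_filter_not (fcPaths (k+1) y) (fun g => fcStep g k = b)]
      congr 1
      · refine Finset.sum_congr rfl fun g hg => ?_
        rw [if_pos (Finset.mem_filter.1 hg).2, add_zero]
      · rw [Finset.sum_mul]
        have : (fcPaths (k+1) y).filter (fun g => ¬ (fcStep g k = b))
            = (fcPaths (k+1) y).filter (fun g => fcStep g k = !b) := by
          apply Finset.filter_congr
          intro g _
          cases b <;> simp
        rw [this]
        refine Finset.sum_congr rfl fun g hg => ?_
        rw [if_neg (by rw [(Finset.mem_filter.1 hg).2]; cases b <;> simp), pow_succ]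
    constructor
    · rw [hbij true, hsplit true (x - if true then 1 else -1)]
      simp only [if_pos trivial, Bool.not_true]
      rw [(ih (x-1)).1, (ih (x-1)).2]
      show _ = (((fcPQ m ε k (x-1)).1 - m*ε*(fcPQ m ε k (x-1)).2 : ℝ) : ℂ)
      push_cast
      ring_nf
      rw [Complex.I_sq]
      ring
    · rw [hbij false, hsplit false (x - if false then 1 else -1)]
      simp only [Bool.not_false]
      have hx1 : x - (if (false : Bool) = true then (1:ℤ) else -1) = x + 1 := by norm_num
      rw [hx1, (ih (x+1)).1, (ih (x+1)).2]
      show _ = -Complex.I * ((m*ε*(fcPQ m ε k (x+1)).1 + (fcPQ m ε k (x+1)).2 : ℝ) : ℂ)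
      push_cast
      ring

-- amplitude in terms of fcPQ
lemma fcAmp_eq (m ε : ℝ) (k : ℕ) (x : ℤ) :
    fcAmp m ε x (k+1)
      = (((1 + m ^ 2 * ε ^ 2) ^ ((1 - ((k+1:ℕ) : ℝ)) / 2) : ℝ) : ℂ) *
        (((fcPQ m ε k x).2 : ℂ) + ((fcPQ m ε k x).1 : ℂ) * Complex.I) := by
  have hsum : (∑ f ∈ fcPaths (k+1) x, (-Complex.I*(m*ε))^(fcTurns f))
      = ((fcPQ m ε k x).1 : ℂ) + -Complex.I * ((fcPQ m ε k x).2 : ℂ) := by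
    rw [← Finset.sum_filter_add_sum_filter_not (fcPaths (k+1) x) (fun f => fcStep f k = true)]
    have hconv : (fcPaths (k+1) x).filter (fun f => ¬ (fcStep f k = true))
        = (fcPaths (k+1) x).filter (fun f => fcStep f k = false) := by
      apply Finset.filter_congr; intro g _; simp
    rw [hconv, (fc_key m ε k x).1, (fc_key m ε k x).2]
  rw [fcAmp, hsum, mul_assoc]
  congr 1
  linear_combination (-((fcPQ m ε k x).2 : ℂ)) * Complex.I_sq

/-- normalization constant -/
def fcc (m ε : ℝ) : ℝ := (1 + m^2*ε^2) ^ (-(1:ℝ)/2)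

lemma fcc_pow (m ε : ℝ) (j : ℕ) :
    ((1 + m ^ 2 * ε ^ 2) ^ ((1 - ((j+1:ℕ) : ℝ)) / 2) : ℝ) = fcc m ε ^ j := by
  have ha : (0:ℝ) ≤ 1 + m^2*ε^2 := by positivity
  rw [fcc, ← Real.rpow_natCast ((1 + m^2*ε^2) ^ (-(1:ℝ)/2)) j, ← Real.rpow_mul ha]
  congr 1
  push_cast
  ring

lemma fcAmp_re (m ε : ℝ) (k : ℕ) (x : ℤ) :
    (fcAmp m ε x (k+1)).re = fcc m ε ^ k * (fcPQ m ε k x).2 := by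
  rw [fcAmp_eq, fcc_pow]
  simp [Complex.mul_re, Complex.add_re, Complex.add_im, ← Complex.ofReal_pow]

lemma fcAmp_im (m ε : ℝ) (k : ℕ) (x : ℤ) :
    (fcAmp m ε x (k+1)).im = fcc m ε ^ k * (fcPQ m ε k x).1 := by
  rw [fcAmp_eq, fcc_pow]
  simp [Complex.mul_im, Complex.add_re, Complex.add_im, ← Complex.ofReal_pow]

/-- normalized components along the diagonal: `fcF` is `b₁(k+1, mu)`, `fcG` is `b₂(k+1, mu)`. -/
def fcF (m ε : ℝ) (mu k : ℕ) : ℝ := fcc m ε ^ (k+mu) * (fcPQ m ε (k+mu) ((k:ℤ)+1-mu)).2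
def fcG (m ε : ℝ) (mu k : ℕ) : ℝ := fcc m ε ^ (k+mu) * (fcPQ m ε (k+mu) ((k:ℤ)+1-mu)).1

lemma fcB_re (m ε : ℝ) (mu k : ℕ) : (fcB m ε (k+1) mu).re = fcF m ε mu k := by
  rw [fcB]
  have h1 : (k+1) + mu = (k+mu) + 1 := by omega
  have h2 : (((k+1:ℕ)):ℤ) - (mu:ℤ) = (k:ℤ)+1-mu := by push_cast; ring
  rw [h1, h2, fcAmp_re, fcF]

lemma fcB_im (m ε : ℝ) (mu k : ℕ) : (fcB m ε (k+1) mu).im = fcG m ε mu k := by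
  rw [fcB]
  have h1 : (k+1) + mu = (k+mu) + 1 := by omega
  have h2 : (((k+1:ℕ)):ℤ) - (mu:ℤ) = (k:ℤ)+1-mu := by push_cast; ring
  rw [h1, h2, fcAmp_im, fcG]

-- recurrences
lemma fcF_rec (m ε : ℝ) (mu k : ℕ) :
    fcF m ε (mu+1) k = fcc m ε * (m*ε*fcG m ε mu k + fcF m ε mu k) := by
  have h1 : k + (mu+1) = (k+mu) + 1 := by omega
  have h2 : (k:ℤ)+1-((mu+1:ℕ):ℤ) = ((k:ℤ)+1-(mu:ℤ)) - 1 := by push_cast; ring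
  rw [fcF, h1, h2]
  show fcc m ε ^ (k+mu+1) * (fcPQ m ε ((k+mu)+1) (((k:ℤ)+1-(mu:ℤ)) - 1)).2 = _
  rw [fcPQ]
  have h3 : (k:ℤ)+1-(mu:ℤ) - 1 + 1 = (k:ℤ)+1-(mu:ℤ) := by ring
  rw [h3, fcG, fcF, pow_succ]
  ring

lemma fcG_rec (m ε : ℝ) (mu k : ℕ) :
    fcG m ε mu (k+1) = fcc m ε * (fcG m ε mu k - m*ε*fcF m ε mu k) := by
  have h1 : (k+1) + mu = (k+mu) + 1 := by omega
  have h2 : ((k+1:ℕ):ℤ)+1-(mu:ℤ) = ((k:ℤ)+1-(mu:ℤ)) + 1 := by push_cast; ring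
  rw [fcG, h1, h2]
  show fcc m ε ^ (k+mu+1) * (fcPQ m ε ((k+mu)+1) (((k:ℤ)+1-(mu:ℤ)) + 1)).1 = _
  rw [fcPQ]
  have h3 : (k:ℤ)+1-(mu:ℤ) + 1 - 1 = (k:ℤ)+1-(mu:ℤ) := by ring
  rw [h3, fcG, fcF, pow_succ]
  ring

-- vanishing lemmas for fcPQ
lemma fcPQ_vanish (m ε : ℝ) : ∀ (j : ℕ) (x : ℤ),
    ((x ≤ 1 - (j:ℤ) ∧ x ≤ 0) → (fcPQ m ε j x).1 = 0)
  ∧ (x ≤ -1 - (j:ℤ) → (fcPQ m ε j x).2 = 0)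
  ∧ ((j:ℤ) + 2 ≤ x → (fcPQ m ε j x).1 = 0)
  ∧ ((j:ℤ) + 2 ≤ x → (fcPQ m ε j x).2 = 0) := by
  intro j
  induction j with
  | zero =>
    intro x
    refine ⟨fun h => ?_, fun h => rfl, fun h => ?_, fun h => rfl⟩
    · rw [fcPQ_zero_1, if_neg (by omega)]
    · rw [fcPQ_zero_1, if_neg (by push_cast at h; omega)]
  | succ j ih =>
    intro x
    refine ⟨fun h => ?_, fun h => ?_, fun h => ?_, fun h => ?_⟩
    · rw [fcPQ_succ_1, (ih (x-1)).1 ⟨by push_cast at h ⊢; omega, by push_cast at h ⊢; omega⟩,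
        (ih (x-1)).2.1 (by push_cast at h ⊢; omega)]
      ring
    · rw [fcPQ_succ_2, (ih (x+1)).1 ⟨by push_cast at h ⊢; omega, by push_cast at h ⊢; omega⟩,
        (ih (x+1)).2.1 (by push_cast at h ⊢; omega)]
      ring
    · rw [fcPQ_succ_1, (ih (x-1)).2.2.1 (by push_cast at h ⊢; omega),
        (ih (x-1)).2.2.2 (by push_cast at h ⊢; omega)]
      ring
    · rw [fcPQ_succ_2, (ih (x+1)).2.2.1 (by push_cast at h ⊢; omega),
        (ih (x+1)).2.2.2 (by push_cast at h ⊢; omega)]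
      ring

lemma fcPQ_diag (m ε : ℝ) : ∀ (k : ℕ),
    (fcPQ m ε k ((k:ℤ)+1)).1 = 1 ∧ (fcPQ m ε k ((k:ℤ)+1)).2 = 0 := by
  intro k
  induction k with
  | zero => exact ⟨by rw [fcPQ_zero_1]; norm_num, rfl⟩
  | succ k ih =>
    constructor
    · rw [fcPQ_succ_1]
      have h : ((k+1:ℕ):ℤ)+1-1 = (k:ℤ)+1 := by push_cast; ring
      rw [h, ih.1, ih.2]
      ring
    · rw [fcPQ_succ_2]
      have h2 : (k:ℤ) + 2 ≤ ((k+1:ℕ):ℤ)+1+1 := by push_cast; omega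
      rw [(fcPQ_vanish m ε k _).2.2.1 h2, (fcPQ_vanish m ε k _).2.2.2 h2]
      ring

lemma fcG_zero (m ε : ℝ) (mu : ℕ) (hmu : 1 ≤ mu) : fcG m ε mu 0 = 0 := by
  rw [fcG, zero_add,
    (fcPQ_vanish m ε mu _).1 ⟨by push_cast; omega, by push_cast; omega⟩]
  ring

lemma fcG_diag (m ε : ℝ) (k : ℕ) : fcG m ε 0 k = fcc m ε ^ k := by
  rw [fcG, Nat.add_zero]
  have h : (k:ℤ)+1-((0:ℕ):ℤ) = (k:ℤ)+1 := by push_cast; ring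
  rw [h, (fcPQ_diag m ε k).1]
  simp

lemma fcF_diag (m ε : ℝ) (k : ℕ) : fcF m ε 0 k = 0 := by
  rw [fcF, Nat.add_zero]
  have h : (k:ℤ)+1-((0:ℕ):ℤ) = (k:ℤ)+1 := by push_cast; ring
  rw [h, (fcPQ_diag m ε k).2]
  ring

lemma fcF_one (m ε : ℝ) (k : ℕ) : fcF m ε 1 k = m * ε * fcc m ε ^ (k+1) := by
  rw [fcF_rec, fcG_diag, fcF_diag, pow_succ]
  ring


lemma fcTurns_le {n : ℕ} (f : Fin n → Bool) : fcTurns f ≤ n - 1 :=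
  le_trans (Finset.card_filter_le _ _) (by rw [Finset.card_range])

lemma abs_fcPQ_le (m ε : ℝ) (hm : 0 ≤ m) (hε : 0 ≤ ε) (j : ℕ) (x : ℤ) :
    |(fcPQ m ε j x).1| ≤ (fcPaths (j+1) x).card * (max 1 (m*ε))^j
  ∧ |(fcPQ m ε j x).2| ≤ (fcPaths (j+1) x).card * (max 1 (m*ε))^j := by
  have hme : 0 ≤ m * ε := mul_nonneg hm hε
  have habs : ∀ (s : Finset (Fin (j+1) → Bool)), s ⊆ fcPaths (j+1) x →
      ‖∑ f ∈ s, (-Complex.I*(m*ε))^(fcTurns f)‖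
        ≤ (fcPaths (j+1) x).card * (max 1 (m*ε))^j := by
    intro s hs
    calc ‖∑ f ∈ s, (-Complex.I*(m*ε))^(fcTurns f)‖
        ≤ ∑ f ∈ s, ‖(-Complex.I*(m*ε))^(fcTurns f)‖ := norm_sum_le _ _
      _ ≤ ∑ _f ∈ s, (max 1 (m*ε))^j := by
          refine Finset.sum_le_sum fun f _ => ?_
          rw [norm_pow]
          have h1 : ‖-Complex.I*(m*ε)‖ = m*ε := by
            rw [norm_mul, norm_neg, Complex.norm_I, one_mul, ← Complex.ofReal_mul,
              Complex.norm_real, Real.norm_eq_abs, abs_of_nonneg hme]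
          rw [h1]
          calc (m*ε)^(fcTurns f) ≤ (max 1 (m*ε))^(fcTurns f) :=
                pow_le_pow_left₀ hme (le_max_right _ _) _
            _ ≤ (max 1 (m*ε))^j := by
                refine pow_le_pow_right₀ (le_max_left _ _) ?_
                have := fcTurns_le f
                omega
      _ = s.card * (max 1 (m*ε))^j := by rw [Finset.sum_const, nsmul_eq_mul]
      _ ≤ (fcPaths (j+1) x).card * (max 1 (m*ε))^j := by
          have h2 : (s.card : ℝ) ≤ ((fcPaths (j+1) x).card : ℝ) := by
            exact_mod_cast Finset.card_le_card hs
          have h3 : (0:ℝ) ≤ (max 1 (m*ε))^j := by positivity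
          exact mul_le_mul_of_nonneg_right h2 h3
  constructor
  · have h := habs _ (Finset.filter_subset (fun f => fcStep f j = true) _)
    rwa [(fc_key m ε j x).1, Complex.norm_real, Real.norm_eq_abs] at h
  · have h := habs _ (Finset.filter_subset (fun f => fcStep f j = false) _)
    rwa [(fc_key m ε j x).2, norm_mul, norm_neg, Complex.norm_I, one_mul,
      Complex.norm_real, Real.norm_eq_abs] at h

lemma fcStep_fin {n : ℕ} (f : Fin n → Bool) (i : Fin n) : fcStep f (i:ℕ) = f i := by
  rw [fcStep_eq f _ i.isLt, Fin.eta]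

lemma fcPos_count {n : ℕ} (f : Fin n → Bool) :
    fcPos f n = (n:ℤ) - 2 * ((Finset.univ.filter fun i => f i = false).card : ℤ) := by
  rw [fcPos]
  have h : ∀ j ∈ Finset.range n,
      (if fcStep f j then (1:ℤ) else -1) = 1 - 2*(if fcStep f j = false then 1 else 0) := by
    intro j _; cases hfc : fcStep f j <;> simp
  rw [Finset.sum_congr rfl h, Finset.sum_sub_distrib, Finset.sum_const, Finset.card_range,
    ← Finset.mul_sum]
  have h2 : ((Finset.univ.filter fun i => f i = false).card : ℤ)
      = ∑ i : Fin n, (if f i = false then (1:ℤ) else 0) := by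
    rw [Finset.card_filter]
    push_cast
    rfl
  rw [h2, ← Fin.sum_univ_eq_sum_range (fun j => if fcStep f j = false then (1:ℤ) else 0) n]
  simp only [fcStep_fin, nsmul_eq_mul, mul_one]

lemma fcPaths_card_le (n : ℕ) (t : ℕ) (x : ℤ) (hx : x = (n:ℤ) - 2*t) :
    (fcPaths n x).card ≤ n.choose t := by
  have key : (fcPaths n x).card ≤ (Finset.powersetCard t (Finset.univ : Finset (Fin n))).card := by
    apply Finset.card_le_card_of_injOn (fun f => Finset.univ.filter fun i => f i = false)
    · intro f hf
      rw [Finset.mem_coe, Finset.mem_powersetCard]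
      refine ⟨Finset.filter_subset _ _, ?_⟩
      rw [Finset.mem_coe, mem_fcPaths_iff] at hf
      have := hf.2
      rw [fcPos_count] at this
      beta_reduce
      omega
    · intro f _ g _ heq
      have heq' : (Finset.univ.filter fun i => f i = false)
          = (Finset.univ.filter fun i => g i = false) := heq
      funext i
      have h1 : (f i = false) ↔ (g i = false) := by
        constructor
        · intro hfi
          have : i ∈ Finset.univ.filter fun i => g i = false := by
            rw [← heq']; simp [hfi]
          simpa using this
        · intro hgi
          have : i ∈ Finset.univ.filter fun i => f i = false := by
            rw [heq']; simp [hgi]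
          simpa using this
      cases hf : f i <;> cases hg : g i
      · rfl
      · simp [hf, hg] at h1
      · simp [hf, hg] at h1
      · rfl
  rwa [Finset.card_powersetCard, Finset.card_univ, Fintype.card_fin] at key

lemma fcc_pos (m ε : ℝ) : 0 < fcc m ε := by
  rw [fcc]
  positivity

lemma fcc_sq (m ε : ℝ) : fcc m ε ^ 2 = (1 + m^2*ε^2)⁻¹ := by
  have ha : (0:ℝ) < 1 + m^2*ε^2 := by positivity
  rw [fcc, ← Real.rpow_natCast ((1 + m^2*ε^2) ^ (-(1:ℝ)/2)) 2, ← Real.rpow_mul ha.le,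
    ← Real.rpow_neg_one]
  norm_num

/-- bound for the normalized components -/
lemma fcFG_bound (m ε : ℝ) (hm : 0 ≤ m) (hε : 0 ≤ ε) (mu k : ℕ) :
    |fcF m ε mu k| ≤ ((k+mu+1:ℕ):ℝ)^mu * (fcc m ε * max 1 (m*ε))^(k+mu)
  ∧ |fcG m ε mu k| ≤ ((k+mu+1:ℕ):ℝ)^mu * (fcc m ε * max 1 (m*ε))^(k+mu) := by
  have hcard : ((fcPaths (k+mu+1) ((k:ℤ)+1-mu)).card : ℝ) ≤ ((k+mu+1:ℕ):ℝ)^mu := by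
    have h1 := fcPaths_card_le (k+mu+1) mu ((k:ℤ)+1-mu) (by push_cast; ring)
    have h2 := Nat.choose_le_pow (k+mu+1) mu
    exact_mod_cast le_trans h1 h2
  have hc := fcc_pos m ε
  have hMj : (0:ℝ) ≤ (max 1 (m*ε))^(k+mu) := by positivity
  have habs := abs_fcPQ_le m ε hm hε (k+mu) ((k:ℤ)+1-mu)
  constructor
  · rw [fcF, abs_mul, abs_of_nonneg (pow_nonneg hc.le _), mul_pow]
    calc fcc m ε^(k+mu) * |(fcPQ m ε (k+mu) ((k:ℤ)+1-mu)).2|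
        ≤ fcc m ε^(k+mu) * (((fcPaths (k+mu+1) ((k:ℤ)+1-mu)).card) * (max 1 (m*ε))^(k+mu)) :=
          mul_le_mul_of_nonneg_left habs.2 (by positivity)
      _ ≤ fcc m ε^(k+mu) * (((k+mu+1:ℕ):ℝ)^mu * (max 1 (m*ε))^(k+mu)) :=
          mul_le_mul_of_nonneg_left (mul_le_mul_of_nonneg_right hcard hMj) (by positivity)
      _ = ((k+mu+1:ℕ):ℝ)^mu * (fcc m ε^(k+mu) * (max 1 (m*ε))^(k+mu)) := by ring
  · rw [fcG, abs_mul, abs_of_nonneg (pow_nonneg hc.le _), mul_pow]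
    calc fcc m ε^(k+mu) * |(fcPQ m ε (k+mu) ((k:ℤ)+1-mu)).1|
        ≤ fcc m ε^(k+mu) * (((fcPaths (k+mu+1) ((k:ℤ)+1-mu)).card) * (max 1 (m*ε))^(k+mu)) :=
          mul_le_mul_of_nonneg_left habs.1 (by positivity)
      _ ≤ fcc m ε^(k+mu) * (((k+mu+1:ℕ):ℝ)^mu * (max 1 (m*ε))^(k+mu)) :=
          mul_le_mul_of_nonneg_left (mul_le_mul_of_nonneg_right hcard hMj) (by positivity)
      _ = ((k+mu+1:ℕ):ℝ)^mu * (fcc m ε^(k+mu) * (max 1 (m*ε))^(k+mu)) := by ring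

lemma fc_ratio_lt_one {m ε : ℝ} (hm : 0 < m) (hε : 0 < ε) :
    (fcc m ε * max 1 (m*ε))^2 < 1 := by
  have ha : (0:ℝ) < 1 + m^2*ε^2 := by positivity
  have h : (fcc m ε * max 1 (m*ε))^2 = (max 1 (m*ε))^2 * (1+m^2*ε^2)⁻¹ := by
    rw [mul_pow, fcc_sq]; ring
  have hM2 : (max 1 (m*ε))^2 < 1 + m^2*ε^2 := by
    rcases le_total (m*ε) 1 with h1 | h1
    · rw [max_eq_left h1, one_pow]
      nlinarith [mul_pos hm hε]
    · rw [max_eq_right h1]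
      nlinarith
  rw [h]
  calc (max 1 (m*ε))^2 * (1+m^2*ε^2)⁻¹ < (1+m^2*ε^2) * (1+m^2*ε^2)⁻¹ :=
        mul_lt_mul_of_pos_right hM2 (inv_pos.2 ha)
    _ = 1 := mul_inv_cancel₀ ha.ne'

lemma summable_aux {m ε : ℝ} (hm : 0 < m) (hε : 0 < ε) (mu : ℕ) :
    Summable (fun k => (fcF m ε mu k)^2) ∧ Summable (fun k => (fcG m ε mu k)^2) := by
  set ρ := (fcc m ε * max 1 (m*ε))^2 with hρdef
  have hρ0 : 0 < ρ :=
    pow_pos (mul_pos (fcc_pos m ε) (lt_of_lt_of_le zero_lt_one (le_max_left _ _))) 2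
  have hρ1 : ρ < 1 := fc_ratio_lt_one hm hε
  have hg : Summable (fun n : ℕ => (n:ℝ)^(2*mu) * ρ^n) :=
    summable_pow_mul_geometric_of_norm_lt_one (2*mu)
      (by rw [Real.norm_eq_abs, abs_of_pos hρ0]; exact hρ1)
  have hshift : Summable (fun k : ℕ => ρ⁻¹ * (((k+(mu+1):ℕ):ℝ)^(2*mu) * ρ^(k+(mu+1)))) :=
    ((summable_nat_add_iff (mu+1)).2 hg).mul_left _
  have hbd : ∀ (w : ℕ → ℝ), (∀ k, |w k| ≤ ((k+mu+1:ℕ):ℝ)^mu * (fcc m ε * max 1 (m*ε))^(k+mu)) →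
      Summable (fun k => (w k)^2) := by
    intro w hw
    refine Summable.of_nonneg_of_le (fun k => sq_nonneg _) (fun k => ?_) hshift
    have h1 : (w k)^2 ≤ (((k+mu+1:ℕ):ℝ)^mu * (fcc m ε * max 1 (m*ε))^(k+mu))^2 := by
      rw [← sq_abs (w k)]
      exact pow_le_pow_left₀ (abs_nonneg _) (hw k) 2
    refine le_trans h1 (le_of_eq ?_)
    have e1 : k+(mu+1) = k+mu+1 := by omega
    have hX0 : fcc m ε * max 1 (m*ε) ≠ 0 :=
      (mul_pos (fcc_pos m ε) (lt_of_lt_of_le zero_lt_one (le_max_left _ _))).ne'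
    have hc0 : fcc m ε ≠ 0 := (fcc_pos m ε).ne'
    rw [e1, hρdef]
    field_simp
    ring
  exact ⟨hbd _ (fun k => (fcFG_bound m ε hm.le hε.le mu k).1),
         hbd _ (fun k => (fcFG_bound m ε hm.le hε.le mu k).2)⟩

lemma summable_FG {m ε : ℝ} (hm : 0 < m) (hε : 0 < ε) (mu : ℕ) :
    Summable (fun k => fcF m ε mu k * fcG m ε mu k) := by
  have hF := (summable_aux hm hε mu).1
  have hG := (summable_aux hm hε mu).2
  rw [← summable_abs_iff]
  refine Summable.of_nonneg_of_le (fun k => abs_nonneg _) (fun k => ?_)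
    ((hF.add hG).mul_left (1/2))
  rw [abs_mul]
  nlinarith [sq_abs (fcF m ε mu k), sq_abs (fcG m ε mu k),
    sq_nonneg (|fcF m ε mu k| - |fcG m ε mu k|),
    abs_nonneg (fcF m ε mu k), abs_nonneg (fcG m ε mu k)]

lemma fcF_hasSum {m ε : ℝ} (hm : 0 < m) (hε : 0 < ε) :
    ∀ mu, 1 ≤ mu → HasSum (fun k => (fcF m ε mu k)^2) 1 := by
  have ha : (0:ℝ) < 1 + m^2*ε^2 := by positivity
  have hme : 0 < m*ε := mul_pos hm hε
  have hc0 := fcc_pos m ε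
  have hc2 := fcc_sq m ε
  have hkey : 1 - fcc m ε^2 = fcc m ε^2 * (m*ε)^2 := by
    rw [hc2]; field_simp; ring
  have hbase : HasSum (fun k => (fcF m ε 1 k)^2) 1 := by
    have hlt : fcc m ε^2 < 1 := by
      rw [hc2]
      have h1 : (1:ℝ) < 1 + m^2*ε^2 := by nlinarith
      exact inv_lt_one_of_one_lt₀ h1
    have h0 := hasSum_geometric_of_lt_one (sq_nonneg (fcc m ε)) hlt
    have h1 := h0.mul_left ((m*ε)^2 * fcc m ε^2)
    have h2 : (m*ε)^2 * fcc m ε^2 * (1 - fcc m ε^2)⁻¹ = 1 := by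
      rw [hkey]
      field_simp
    rw [h2] at h1
    have hfe : (fun k : ℕ => (fcF m ε 1 k)^2)
        = fun k => (m*ε)^2*fcc m ε^2 * (fcc m ε^2)^k := by
      funext k; rw [fcF_one]; ring
    rw [hfe]
    exact h1
  have hstep : ∀ mu, 1 ≤ mu →
      ∑' k, (fcF m ε (mu+1) k)^2 = ∑' k, (fcF m ε mu k)^2 := by
    intro mu hmu
    have hF := (summable_aux hm hε mu).1
    have hG := (summable_aux hm hε mu).2
    have hU := summable_FG hm hε mu
    set c := fcc m ε with hcdef
    have e3 : ∑' k, (fcF m ε (mu+1) k)^2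
        = c^2*(m*ε)^2 * (∑' k, (fcG m ε mu k)^2)
          + (2*c^2*(m*ε)) * (∑' k, (fcF m ε mu k * fcG m ε mu k))
          + c^2 * (∑' k, (fcF m ε mu k)^2) := by
      have h3 : ∀ k, (fcF m ε (mu+1) k)^2
          = (c^2*(m*ε)^2) * (fcG m ε mu k)^2
            + (2*c^2*(m*ε)) * (fcF m ε mu k * fcG m ε mu k)
            + c^2 * (fcF m ε mu k)^2 := by
        intro k; rw [fcF_rec]; ring
      rw [tsum_congr h3,
        Summable.tsum_add (Summable.add (hG.mul_left _) (hU.mul_left _)) (hF.mul_left _),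
        Summable.tsum_add (hG.mul_left _) (hU.mul_left _), tsum_mul_left, tsum_mul_left, tsum_mul_left]
    have h2' : ∀ k, (fcG m ε mu (k+1))^2
        = c^2 * (fcG m ε mu k)^2
          + (-(2*c^2*(m*ε))) * (fcF m ε mu k * fcG m ε mu k)
          + (c^2*(m*ε)^2) * (fcF m ε mu k)^2 := by
      intro k; rw [fcG_rec]; ring
    have htail : ∑' k, (fcG m ε mu (k+1))^2
        = c^2 * (∑' k, (fcG m ε mu k)^2)
          + (-(2*c^2*(m*ε))) * (∑' k, (fcF m ε mu k * fcG m ε mu k))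
          + (c^2*(m*ε)^2) * (∑' k, (fcF m ε mu k)^2) := by
      rw [tsum_congr h2',
        Summable.tsum_add (Summable.add (hG.mul_left _) (hU.mul_left _)) (hF.mul_left _),
        Summable.tsum_add (hG.mul_left _) (hU.mul_left _), tsum_mul_left, tsum_mul_left, tsum_mul_left]
    have h0 : ∑' k, (fcG m ε mu k)^2 = ∑' k, (fcG m ε mu (k+1))^2 := by
      rw [Summable.tsum_eq_zero_add hG, fcG_zero m ε mu hmu]
      norm_num
    have e2 := h0.trans htail
    linear_combination e3 + e2
      - ((∑' k, (fcG m ε mu k)^2) + (∑' k, (fcF m ε mu k)^2)) * hkey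
  intro mu hmu
  obtain ⟨j, rfl⟩ : ∃ j, mu = 1 + j := ⟨mu - 1, by omega⟩
  have hval : ∑' k, (fcF m ε (1+j) k)^2 = 1 := by
    clear hmu
    induction j with
    | zero => exact hbase.tsum_eq
    | succ j ihj =>
      have h1 : (1+(j+1)) = (1+j)+1 := by omega
      rw [h1, hstep (1+j) (by omega), ihj]
  exact ((summable_aux hm hε (1+j)).1).hasSum_iff.2 hval


/-- For fixed `μ ∈ ℤ₊`, the series `Σ_{λ=1}^∞ b₁(λ,μ,m,ε)²` converges to `1`. -/
theorem stmt8 (m ε : ℝ) (hε : 0 < ε) (hm : 0 < m) (mu : ℕ) (hmu : 1 ≤ mu) :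
    HasSum (fun k : ℕ => (fcB m ε (k + 1) mu).re ^ 2) 1 := by
  simpa only [fcB_re] using fcF_hasSum hm hε mu hmu
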